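/- Let I be a nonempty left-hereditary sub-semigroup of 𝒵 and let Z ∈ 𝒵 satisfy Z ≤ ⋁_{Y ∈ I} Y. Then for every ε > 0 the delayed process Z_{-ε} belongs to I, where Z_{-ε}(t) = Z(t - ε) for t > ε and Z_{-ε}(t) = D for t ≤ ε. -/

import Mathlib

open Set NNReal ENNReal

/-- A "partial order" on `M`: a reflexive and transitive (not necessarily
antisymmetric) relation, identified with a subset of `M × M`. -/
def IsPO {M : Type*} (V : Set (M × M)) : Prop :=
  (∀ j : M, (j, j) ∈ V) ∧ ∀ j k l : M, (j, k) ∈ V → (k, l) ∈ V → (j, l) ∈ V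

/-- The diagonal relation `D`. -/
def diagRel (M : Type*) : Set (M × M) := {p : M × M | p.1 = p.2}

/-- The smallest partial order containing `S` (reflexive-transitive closure). -/
def poGen {M : Type*} (S : Set (M × M)) : Set (M × M) :=
  ⋂₀ {V : Set (M × M) | IsPO V ∧ S ⊆ V}

/-- The join of two partial orders: the smallest partial order containing their union. -/
def poJoin {M : Type*} (V W : Set (M × M)) : Set (M × M) := poGen (V ∪ W)

/-- Membership in `𝒴`: maps `Y : [0,∞) → {partial orders on M}` with `Y 0 = D`,
increasing, and left-continuous. -/
def MemY {M : Type*} (Y : ℝ≥0 → Set (M × M)) : Prop :=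
  (∀ t : ℝ≥0, IsPO (Y t)) ∧ Y 0 = diagRel M ∧
    (∀ s t : ℝ≥0, s ≤ t → Y s ⊆ Y t) ∧
    ∀ t : ℝ≥0, 0 < t → Y t = ⋃ s ∈ Set.Iio t, Y s

/-- The pointwise join on `𝒴`. -/
def joinY {M : Type*} (Y Z : ℝ≥0 → Set (M × M)) : ℝ≥0 → Set (M × M) :=
  fun t => poJoin (Y t) (Z t)

/-- The support of a partial order `V`. -/
def suppV {M : Type*} (V : Set (M × M)) : Set M :=
  {j : M | ∃ k : M, k ≠ j ∧ ((j, k) ∈ V ∨ (k, j) ∈ V)}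

/-- The support of an order process `Y ∈ 𝒴`. -/
def suppY {M : Type*} (Y : ℝ≥0 → Set (M × M)) : Set M := ⋃ t : ℝ≥0, suppV (Y t)

/-- Membership in `𝒵`: elements of `𝒴` with finite support. -/
def MemZ {M : Type*} (Y : ℝ≥0 → Set (M × M)) : Prop := MemY Y ∧ (suppY Y).Finite

/-- The order on `𝒴`: `Y ≤ Z` iff `Y ∨ Z = Z`. -/
def leY {M : Type*} (Y Z : ℝ≥0 → Set (M × M)) : Prop := joinY Y Z = Z

/-- A sub-semigroup of `𝒵`. -/
def IsSubsemigroupZ {M : Type*} (I : Set (ℝ≥0 → Set (M × M))) : Prop :=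
  (∀ Y ∈ I, MemZ Y) ∧ ∀ Y ∈ I, ∀ Z ∈ I, joinY Y Z ∈ I

/-- Left-hereditary sub-semigroups. -/
def LeftHereditary {M : Type*} (I : Set (ℝ≥0 → Set (M × M))) : Prop :=
  ∀ Z₁ Z₂ : ℝ≥0 → Set (M × M), MemZ Z₁ → Z₂ ∈ I → leY Z₁ Z₂ → Z₁ ∈ I

/-- The pointwise join of a set of order processes. -/
def joinSetY {M : Type*} (I : Set (ℝ≥0 → Set (M × M))) : ℝ≥0 → Set (M × M) :=
  fun t => poGen (⋃ Y ∈ I, Y t)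

/-- The delayed process `Z₋ε` (`ℝ≥0` has truncated subtraction, so
`Z₋ε t = Z (t - ε)` equals `Z 0 = D` for `t ≤ ε`). -/
def shiftY {M : Type*} (Z : ℝ≥0 → Set (M × M)) (ε : ℝ≥0) : ℝ≥0 → Set (M × M) :=
  fun t => Z (t - ε)

section aux
variable {M : Type*}

lemma isPO_poGen (S : Set (M × M)) : IsPO (poGen S) := by
  constructor
  · intro j V hV; exact hV.1.1 j
  · intro j k l hjk hkl V hV
    exact hV.1.2 j k l (hjk V hV) (hkl V hV)

lemma subset_poGen (S : Set (M × M)) : S ⊆ poGen S := by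
  intro p hp V hV; exact hV.2 hp

lemma poGen_subset {S V : Set (M × M)} (hV : IsPO V) (h : S ⊆ V) : poGen S ⊆ V :=
  Set.sInter_subset_of_mem ⟨hV, h⟩

lemma poGen_mono {S T : Set (M × M)} (h : S ⊆ T) : poGen S ⊆ poGen T := by
  intro p hp V hV
  exact hp V ⟨hV.1, h.trans hV.2⟩

lemma poGen_of_isPO {V : Set (M × M)} (hV : IsPO V) : poGen V = V :=
  le_antisymm (poGen_subset hV subset_rfl) (subset_poGen V)

lemma poJoin_eq_right {V W : Set (M × M)} (hW : IsPO W) (h : V ⊆ W) : poJoin V W = W := by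
  refine le_antisymm (poGen_subset hW (Set.union_subset h subset_rfl)) ?_
  exact Set.subset_union_right.trans (subset_poGen _)

lemma poGen_biUnion_subset_finite (I : Set (ℝ≥0 → Set (M × M))) (t : ℝ≥0) :
    poGen (⋃ Y ∈ I, Y t) ⊆
      {p | ∃ J : Finset (ℝ≥0 → Set (M × M)), ↑J ⊆ I ∧ p ∈ poGen (⋃ Y ∈ J, Y t)} := by
  classical
  apply poGen_subset
  · constructor
    · intro j
      exact ⟨∅, by simp, (isPO_poGen _).1 j⟩
    · rintro j k l ⟨J₁, hJ₁, h1⟩ ⟨J₂, hJ₂, h2⟩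
      refine ⟨J₁ ∪ J₂, by rw [Finset.coe_union]; exact Set.union_subset hJ₁ hJ₂, ?_⟩
      have m1 : (⋃ Y ∈ J₁, Y t) ⊆ ⋃ Y ∈ (J₁ ∪ J₂ : Finset _), Y t := by
        intro x hx
        simp only [Set.mem_iUnion] at hx ⊢
        obtain ⟨Y, hY, h⟩ := hx
        exact ⟨Y, Finset.mem_union_left _ hY, h⟩
      have m2 : (⋃ Y ∈ J₂, Y t) ⊆ ⋃ Y ∈ (J₁ ∪ J₂ : Finset _), Y t := by
        intro x hx
        simp only [Set.mem_iUnion] at hx ⊢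
        obtain ⟨Y, hY, h⟩ := hx
        exact ⟨Y, Finset.mem_union_right _ hY, h⟩
      exact (isPO_poGen _).2 j k l (poGen_mono m1 h1) (poGen_mono m2 h2)
  · intro p hp
    simp only [Set.mem_iUnion] at hp
    obtain ⟨Y, hY, hp⟩ := hp
    refine ⟨{Y}, by simpa using hY, subset_poGen _ ?_⟩
    simp [hp]
end aux


section aux2
variable {M : Type*}

lemma subset_poGen' (S : Set (M × M)) : S ⊆ poGen S := by
  intro p hp V hV; exact hV.2 hp

lemma exists_join_finset {I : Set (ℝ≥0 → Set (M × M))} (hI : IsSubsemigroupZ I)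
    {Y₀ : ℝ≥0 → Set (M × M)} (hY₀ : Y₀ ∈ I) :
    ∀ J : Finset (ℝ≥0 → Set (M × M)), ↑J ⊆ I →
      ∃ W ∈ I, ∀ t, (⋃ Y ∈ J, Y t) ⊆ W t := by
  classical
  intro J
  induction J using Finset.induction_on with
  | empty => exact fun _ => ⟨Y₀, hY₀, fun t => by simp⟩
  | @insert Y J hYJ ih =>
    intro hJ
    obtain ⟨W, hWI, hW⟩ := ih (fun x hx => hJ (by simp [hx]))
    refine ⟨joinY Y W, hI.2 Y (hJ (by simp)) W hWI, fun t => ?_⟩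
    rw [Finset.set_biUnion_insert]
    refine Set.union_subset ?_ ?_
    · exact Set.subset_union_left.trans (subset_poGen' _)
    · exact (hW t).trans (Set.subset_union_right.trans (subset_poGen' _))

lemma exists_mem_join {I : Set (ℝ≥0 → Set (M × M))} (hI : IsSubsemigroupZ I)
    {Y₀ : ℝ≥0 → Set (M × M)} (hY₀ : Y₀ ∈ I) (f : M × M → ℝ≥0)
    {P : Set (M × M)} (hP : P.Finite) :
    (∀ p ∈ P, ∃ W ∈ I, p ∈ W (f p)) → ∃ W ∈ I, ∀ p ∈ P, p ∈ W (f p) := by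
  refine Set.Finite.induction_on
    (motive := fun P _ => (∀ p ∈ P, ∃ W ∈ I, p ∈ W (f p)) → ∃ W ∈ I, ∀ p ∈ P, p ∈ W (f p))
    P hP (fun _ => ⟨Y₀, hY₀, by simp⟩) ?_
  intro a s ha hs ih h
  · 
    obtain ⟨W, hWI, hW⟩ := ih (fun p hp => h p (Set.mem_insert_of_mem _ hp))
    obtain ⟨Wa, hWaI, hWa⟩ := h a (Set.mem_insert _ _)
    refine ⟨joinY Wa W, hI.2 Wa hWaI W hWI, ?_⟩
    rintro p (rfl | hp)
    · exact Set.subset_union_left.trans (subset_poGen' _) hWa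
    · exact Set.subset_union_right.trans (subset_poGen' _) (hW p hp)
end aux2


/-- If `I` is a nonempty left-hereditary sub-semigroup of `𝒵` and `Z ∈ 𝒵` with
`Z ≤ ⋁_{Y ∈ I} Y`, then `Z₋ε ∈ I` for every `ε > 0`. -/
theorem shift_mem_of_le_join {M : Type*} [Countable M] [Infinite M]
    (I : Set (ℝ≥0 → Set (M × M))) (hne : I.Nonempty)
    (hI : IsSubsemigroupZ I) (hIh : LeftHereditary I)
    (Z : ℝ≥0 → Set (M × M)) (hZ : MemZ Z) (hle : leY Z (joinSetY I)) :
    ∀ ε : ℝ≥0, 0 < ε → shiftY Z ε ∈ I := by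
  classical
  intro ε hε
  obtain ⟨Y₀, hY₀⟩ := hne
  -- Z t ⊆ joinSetY I t
  have hZle : ∀ t, Z t ⊆ joinSetY I t := by
    intro t
    have h := congrFun hle t
    rw [← h]
    exact Set.subset_union_left.trans (subset_poGen _)
  -- the set of off-diagonal pairs appearing in Z
  set P : Set (M × M) := {p | p.1 ≠ p.2 ∧ ∃ t, p ∈ Z t} with hPdef
  have hPfin : P.Finite := by
    apply (hZ.2.prod hZ.2).subset
    rintro ⟨j, k⟩ ⟨hjk, t, ht⟩
    constructor
    · exact Set.mem_iUnion.2 ⟨t, ⟨k, Ne.symm hjk, Or.inl ht⟩⟩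
    · exact Set.mem_iUnion.2 ⟨t, ⟨j, hjk, Or.inr ht⟩⟩
  -- entry times
  set τ : M × M → ℝ≥0 := fun p => sInf {t | p ∈ Z t} with hτdef
  have hτmem : ∀ p ∈ P, p ∈ Z (τ p + ε) := by
    rintro p ⟨-, t, ht⟩
    have hne' : {t | p ∈ Z t}.Nonempty := ⟨t, ht⟩
    obtain ⟨s, hs, hslt⟩ := exists_lt_of_csInf_lt hne' (lt_add_of_pos_right _ hε)
    exact hZ.1.2.2.1 s (τ p + ε) hslt.le hs
  have hτle : ∀ p, ∀ s, p ∈ Z s → τ p ≤ s := fun p s hs =>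
    csInf_le (OrderBot.bddBelow _) hs
  -- for each p ∈ P there is W ∈ I with p ∈ W (τ p + ε)
  have key : ∀ p ∈ P, ∃ W ∈ I, p ∈ W (τ p + ε) := by
    intro p hp
    have h1 : p ∈ poGen (⋃ Y ∈ I, Y (τ p + ε)) := hZle _ (hτmem p hp)
    obtain ⟨J, hJI, hpJ⟩ := poGen_biUnion_subset_finite I (τ p + ε) h1
    obtain ⟨W, hWI, hW⟩ := exists_join_finset hI hY₀ J hJI
    refine ⟨W, hWI, ?_⟩
    have : poGen (⋃ Y ∈ J, Y (τ p + ε)) ⊆ W (τ p + ε) := by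
      rw [← poGen_of_isPO ((hI.1 W hWI).1.1 (τ p + ε))]
      exact poGen_mono (hW _)
    exact this hpJ
  obtain ⟨W, hWI, hW⟩ := exists_mem_join hI hY₀ (fun p => τ p + ε) hPfin key
  have hWZ : MemZ W := hI.1 W hWI
  -- shiftY Z ε ≤ W
  have hsub : ∀ t, shiftY Z ε t ⊆ W t := by
    intro t q hq
    by_cases hd : q.1 = q.2
    · have : q = (q.1, q.1) := Prod.ext rfl hd.symm
      rw [this]
      exact hWZ.1.1 t |>.1 q.1
    · have hqP : q ∈ P := ⟨hd, t - ε, hq⟩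
      have hεt : ε ≤ t := by
        by_contra hlt
        push_neg at hlt
        have hq2 : q ∈ Z (t - ε) := hq
        rw [tsub_eq_zero_of_le hlt.le, hZ.1.2.1] at hq2
        exact hd hq2
      have h2 : τ q + ε ≤ t := by
        calc τ q + ε ≤ (t - ε) + ε := add_le_add_left (hτle q _ hq) ε
        _ = t := tsub_add_cancel_of_le hεt
      exact hWZ.1.2.2.1 _ t h2 (hW q hqP)
  have hleW : leY (shiftY Z ε) W := by
    funext t
    exact poJoin_eq_right (hWZ.1.1 t) (hsub t)
  -- shiftY Z ε ∈ 𝒵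
  have hmemZ : MemZ (shiftY Z ε) := by
    refine ⟨⟨fun t => hZ.1.1 _, ?_, fun s t hst => hZ.1.2.2.1 _ _ (tsub_le_tsub_right hst ε), ?_⟩, ?_⟩
    · show Z (0 - ε) = diagRel M
      rw [zero_tsub]
      exact hZ.1.2.1
    · intro t ht
      apply le_antisymm
      · intro q hq
        by_cases hεt : t ≤ ε
        · have h0 : t - ε = 0 := tsub_eq_zero_of_le hεt
          refine Set.mem_biUnion ht ?_
          show q ∈ Z (0 - ε)
          rw [zero_tsub, ← h0]
          exact hq
        · push_neg at hεt
          have hpos : 0 < t - ε := tsub_pos_of_lt hεt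
          have hq' := hq
          rw [show shiftY Z ε t = Z (t - ε) from rfl, hZ.1.2.2.2 (t - ε) hpos] at hq'
          obtain ⟨u, hu, hqu⟩ := Set.mem_iUnion₂.1 hq'
          have hst : u + ε < t := lt_tsub_iff_right.mp hu
          refine Set.mem_biUnion hst ?_
          show q ∈ Z (u + ε - ε)
          rwa [add_tsub_cancel_right]
      · exact Set.iUnion₂_subset fun s hs =>
          hZ.1.2.2.1 _ _ (tsub_le_tsub_right (le_of_lt hs) ε)
    · apply hZ.2.subset
      intro j hj
      obtain ⟨t, ht⟩ := Set.mem_iUnion.1 hj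
      exact Set.mem_iUnion.2 ⟨t - ε, ht⟩
  exact hIh (shiftY Z ε) W hmemZ hWI hleW
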